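/- For every even positive integer p, the Turán number ex(p+2, B_p) equals p(p+2)/2. -/

import Mathlib

open SimpleGraph

/-- A graph contains the book `B_p` iff some edge has at least `p` common neighbors. -/
def SimpleGraph.ContainsBook {V : Type*} (G : SimpleGraph V) (p : ℕ) : Prop :=
  ∃ x y, G.Adj x y ∧ p ≤ (G.commonNeighbors x y).ncard

/-- The Turán number `ex(n, B_p)`: the maximum number of edges of a simple graph
on `n` vertices containing no book `B_p`. -/
noncomputable def bookTuranNumber (n p : ℕ) : ℕ :=
  sSup {e : ℕ | ∃ G : SimpleGraph (Fin n), ¬ G.ContainsBook p ∧ G.edgeSet.ncard = e}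

/-- The disjoint union of `m` copies of the complete graph `K_k`. -/
def unionComplete (m k : ℕ) : SimpleGraph (Fin m × Fin k) :=
  SimpleGraph.fromRel fun a b => a.1 = b.1

/-- The join `G ∨ H` of two graphs. -/
def SimpleGraph.join {α β : Type*} (G : SimpleGraph α) (H : SimpleGraph β) :
    SimpleGraph (α ⊕ β) := (Gᶜ ⊕g Hᶜ)ᶜ

/-- A disjoint union of cycles `C_{i 0} + ⋯ + C_{i (t-1)}`. -/
def cycleFamily (t : ℕ) (i : Fin t → ℕ) : SimpleGraph (Σ j : Fin t, Fin (i j)) :=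
  SimpleGraph.fromRel fun a b => ∃ h : a.1 = b.1, (SimpleGraph.cycleGraph (i b.1)).Adj (h ▸ a.2) b.2

/-- `K_n` minus a perfect matching of pairs `{2k, 2k+1}`. -/
def matchG (n : ℕ) : SimpleGraph (Fin n) where
  Adj a b := (a : ℕ) / 2 ≠ (b : ℕ) / 2
  symm := ⟨fun a b h => h.symm⟩
  loopless := ⟨fun a h => h rfl⟩

instance (n : ℕ) : DecidableRel (matchG n).Adj :=
  fun a b => inferInstanceAs (Decidable ((a : ℕ) / 2 ≠ (b : ℕ) / 2))

lemma matchG_adj (n : ℕ) (a b : Fin n) : (matchG n).Adj a b ↔ (a : ℕ) / 2 ≠ (b : ℕ) / 2 :=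
  Iff.rfl

lemma edgeSet_ncard_eq (n : ℕ) (G : SimpleGraph (Fin n)) [Fintype G.edgeSet] :
    G.edgeSet.ncard = G.edgeFinset.card := by
  rw [← SimpleGraph.coe_edgeFinset, Set.ncard_coe_finset]

/-- the partner of a vertex under the matching -/
lemma matchG_partner (p : ℕ) (hev : Even p) (x : Fin (p + 2)) :
    ∃ w : Fin (p + 2), w ≠ x ∧ (w : ℕ) / 2 = (x : ℕ) / 2 ∧
      ∀ z : Fin (p + 2), (z : ℕ) / 2 = (x : ℕ) / 2 → z = x ∨ z = w := by
  obtain ⟨k, hk⟩ := hev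
  have hx : (x : ℕ) < p + 2 := x.isLt
  refine ⟨⟨if (x : ℕ) % 2 = 0 then (x : ℕ) + 1 else (x : ℕ) - 1, by split <;> omega⟩,
    ?_, ?_, ?_⟩
  · intro h
    have := congrArg Fin.val h
    simp only at this
    split at this <;> omega
  · simp only
    split <;> omega
  · intro z hz
    have hzlt : (z : ℕ) < p + 2 := z.isLt
    have : (z : ℕ) = (x : ℕ) ∨ (z : ℕ) = (if (x : ℕ) % 2 = 0 then (x : ℕ) + 1 else (x : ℕ) - 1) := by
      split <;> omega
    rcases this with h | h
    · exact Or.inl (Fin.ext h)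
    · exact Or.inr (Fin.ext h)

lemma matchG_neighborFinset (p : ℕ) (hev : Even p) (x : Fin (p + 2)) :
    ∃ w : Fin (p + 2), w ≠ x ∧ (w : ℕ) / 2 = (x : ℕ) / 2 ∧
      (matchG (p + 2)).neighborFinset x = Finset.univ \ {x, w} := by
  obtain ⟨w, hwx, hw2, hwall⟩ := matchG_partner p hev x
  refine ⟨w, hwx, hw2, ?_⟩
  ext z
  simp only [SimpleGraph.mem_neighborFinset, matchG_adj, Finset.mem_sdiff, Finset.mem_univ,
    Finset.mem_insert, Finset.mem_singleton, true_and]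
  constructor
  · intro h hz
    rcases hz with rfl | rfl
    · exact h rfl
    · exact h hw2.symm
  · intro h hdiv
    rcases hwall z hdiv.symm with rfl | rfl
    · exact h (Or.inl rfl)
    · exact h (Or.inr rfl)

lemma matchG_degree (p : ℕ) (hev : Even p) (x : Fin (p + 2)) :
    (matchG (p + 2)).degree x = p := by
  obtain ⟨w, hwx, _, hnb⟩ := matchG_neighborFinset p hev x
  have hd : (matchG (p + 2)).degree x = ((matchG (p + 2)).neighborFinset x).card := rfl
  rw [hd, hnb, Finset.card_sdiff_of_subset (by simp)]
  rw [Finset.card_insert_of_notMem (by simp [hwx.symm]), Finset.card_singleton]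
  simp

lemma matchG_not_containsBook (p : ℕ) (hp : 1 ≤ p) (hev : Even p) :
    ¬ (matchG (p + 2)).ContainsBook p := by
  rintro ⟨x, y, hxy, hcard⟩
  -- common neighbors are inside neighborFinset x minus y
  have hy : y ∈ (matchG (p + 2)).neighborFinset x := by
    rw [SimpleGraph.mem_neighborFinset]; exact hxy
  have hsub : (matchG (p + 2)).commonNeighbors x y ⊆
      ↑(((matchG (p + 2)).neighborFinset x).erase y) := by
    intro z hz
    rw [SimpleGraph.mem_commonNeighbors] at hz
    simp only [Finset.coe_erase, Set.mem_diff, Set.mem_singleton_iff]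
    refine ⟨by simp only [Finset.mem_coe, SimpleGraph.mem_neighborFinset]; exact hz.1, ?_⟩
    rintro rfl
    exact hz.2.ne rfl
  have hle := Set.ncard_le_ncard hsub (Set.toFinite _)
  rw [Set.ncard_coe_finset, Finset.card_erase_of_mem hy] at hle
  have hdeg : ((matchG (p + 2)).neighborFinset x).card = p := matchG_degree p hev x
  omega

lemma matchG_edge_count (p : ℕ) (hev : Even p) :
    (matchG (p + 2)).edgeSet.ncard = p * (p + 2) / 2 := by
  have hsum : ∑ v : Fin (p + 2), (matchG (p + 2)).degree v
      = 2 * (matchG (p + 2)).edgeFinset.card :=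
    SimpleGraph.sum_degrees_eq_twice_card_edges _
  have hdeg : ∑ v : Fin (p + 2), (matchG (p + 2)).degree v = (p + 2) * p := by
    rw [Finset.sum_congr rfl (fun v _ => matchG_degree p hev v)]
    simp [Finset.sum_const, mul_comm]
  rw [edgeSet_ncard_eq]
  obtain ⟨k, hk⟩ := hev
  have h2 : p * (p + 2) = 2 * (k * (p + 2)) := by subst hk; ring
  have h3 : (p + 2) * p = 2 * (k * (p + 2)) := by subst hk; ring
  omega

lemma book_upper (p : ℕ) (hp : 1 ≤ p) (hev : Even p) (G : SimpleGraph (Fin (p + 2)))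
    (hG : ¬ G.ContainsBook p) : G.edgeSet.ncard ≤ p * (p + 2) / 2 := by
  classical
  -- every vertex has degree at most p + 1
  have hdle : ∀ v, G.degree v ≤ p + 1 := by
    intro v
    have := G.degree_lt_card_verts v
    simp only [Fintype.card_fin] at this
    omega
  -- at most one vertex has degree p + 1
  have huniv : ∀ v, G.degree v = p + 1 → G.neighborFinset v = Finset.univ.erase v := by
    intro v hv
    apply Finset.eq_of_subset_of_card_le
    · intro z hz
      rw [SimpleGraph.mem_neighborFinset] at hz
      exact Finset.mem_erase.2 ⟨hz.ne', Finset.mem_univ z⟩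
    · rw [Finset.card_erase_of_mem (Finset.mem_univ v)]
      simp only [Finset.card_univ, Fintype.card_fin]
      rw [show G.neighborFinset v = G.neighborFinset v from rfl]
      have : (G.neighborFinset v).card = p + 1 := hv
      omega
  have hUcard : (Finset.univ.filter (fun v => G.degree v = p + 1)).card ≤ 1 := by
    by_contra h
    push_neg at h
    obtain ⟨x, hx, y, hy, hxy⟩ := Finset.one_lt_card.1 h
    rw [Finset.mem_filter] at hx hy
    have hnx := huniv x hx.2
    have hny := huniv y hy.2
    apply hG
    refine ⟨x, y, ?_, ?_⟩
    · rw [← SimpleGraph.mem_neighborFinset, hnx]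
      exact Finset.mem_erase.2 ⟨hxy.symm, Finset.mem_univ y⟩
    · have hsub : (Set.univ \ {x, y} : Set (Fin (p + 2))) ⊆ G.commonNeighbors x y := by
        intro z hz
        obtain ⟨-, hz2⟩ := hz
        simp only [Set.mem_insert_iff, Set.mem_singleton_iff, not_or] at hz2
        rw [SimpleGraph.mem_commonNeighbors]
        constructor
        · rw [← SimpleGraph.mem_neighborFinset, hnx]
          exact Finset.mem_erase.2 ⟨hz2.1, Finset.mem_univ z⟩
        · rw [← SimpleGraph.mem_neighborFinset, hny]
          exact Finset.mem_erase.2 ⟨hz2.2, Finset.mem_univ z⟩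
      have hle := Set.ncard_le_ncard hsub (Set.toFinite _)
      rw [Set.ncard_diff (Set.subset_univ _), Set.ncard_univ, Set.ncard_pair hxy,
        Nat.card_eq_fintype_card, Fintype.card_fin] at hle
      omega
  -- sum of degrees bound
  have hsum : ∑ v : Fin (p + 2), G.degree v ≤ (p + 2) * p + 1 := by
    calc ∑ v : Fin (p + 2), G.degree v
        ≤ ∑ v : Fin (p + 2), (p + if G.degree v = p + 1 then 1 else 0) := by
          apply Finset.sum_le_sum
          intro v _
          have := hdle v
          split <;> omega
      _ = (p + 2) * p + (Finset.univ.filter (fun v => G.degree v = p + 1)).card := by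
          rw [Finset.sum_add_distrib, Finset.sum_const, Finset.sum_boole]
          simp [mul_comm]
      _ ≤ (p + 2) * p + 1 := by omega
  have h2m : ∑ v : Fin (p + 2), G.degree v = 2 * G.edgeFinset.card :=
    SimpleGraph.sum_degrees_eq_twice_card_edges _
  rw [edgeSet_ncard_eq]
  obtain ⟨k, hk⟩ := hev
  have h2 : p * (p + 2) = 2 * (k * (p + 2)) := by subst hk; ring
  have h3 : (p + 2) * p = 2 * (k * (p + 2)) := by subst hk; ring
  omega

theorem stmt3 (p : ℕ) (hp : 1 ≤ p) (hev : Even p) :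
    bookTuranNumber (p + 2) p = p * (p + 2) / 2 := by
  apply IsGreatest.csSup_eq
  constructor
  · exact ⟨matchG (p + 2), matchG_not_containsBook p hp hev, matchG_edge_count p hev⟩
  · rintro e ⟨G, hG, rfl⟩
    exact book_upper p hp hev G hG
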